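/- There exist self-adjoint operators A, B on the two-dimensional complex Hilbert space ℂ² (concretely one may take the matrices A = [[0, i], [−i, 0]] and B = [[0, 1−i], [1+i, 0]], acting on ℂ² with the Euclidean inner product) such that A, B and A + B are all invertible (hence M-P invertible), ‖A‖ = 1, ‖B‖ = √2, and ‖A∘(A+B)⁻¹∘B‖ = √2; in particular ‖A∘(A+B)⁻¹∘B‖ > (‖A‖·‖B‖)/(‖A‖ + ‖B‖), so the norm bound for the parallel sum can fail for self-adjoint (non-positive) operators. -/

import Mathlib

open ContinuousLinearMap

noncomputable abbrev phi2 : Matrix (Fin 2) (Fin 2) ℂ ≃⋆ₐ[ℂ]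
    (EuclideanSpace ℂ (Fin 2) →L[ℂ] EuclideanSpace ℂ (Fin 2)) :=
  Matrix.toEuclideanCLM (𝕜 := ℂ) (n := Fin 2)

lemma phi2_apply (M : Matrix (Fin 2) (Fin 2) ℂ) (x : EuclideanSpace ℂ (Fin 2)) (i : Fin 2) :
    (phi2 M x) i = M i 0 * x 0 + M i 1 * x 1 := by
  have h := Matrix.ofLp_toEuclideanCLM (𝕜 := ℂ) M x
  have h2 : (WithLp.equiv 2 (Fin 2 → ℂ)) (phi2 M x) i
      = (Matrix.toLin' M ((WithLp.equiv 2 (Fin 2 → ℂ)) x)) i := rfl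
  simpa [Matrix.toLin'_apply, Matrix.mulVec, dotProduct, Fin.sum_univ_two] using h2

lemma phi2_norm (a b : ℂ) (r : ℝ) (hr : 0 ≤ r) (ha : ‖a‖ = r) (hb : ‖b‖ = r) :
    ‖phi2 !![0, a; b, 0]‖ = r := by
  have key : ∀ x : EuclideanSpace ℂ (Fin 2), ‖phi2 !![0, a; b, 0] x‖ = r * ‖x‖ := by
    intro x
    rw [EuclideanSpace.norm_eq, EuclideanSpace.norm_eq]
    rw [← Real.sqrt_sq hr, ← Real.sqrt_mul (by positivity)]
    congr 1
    simp only [Fin.sum_univ_two, phi2_apply]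
    norm_num [Matrix.cons_val_zero, Matrix.cons_val_one, Matrix.head_cons, norm_mul, ha, hb]
    ring
  apply le_antisymm
  · exact ContinuousLinearMap.opNorm_le_bound _ hr (fun x => (key x).le)
  · have h1 : ‖(EuclideanSpace.single 1 (1:ℂ) : EuclideanSpace ℂ (Fin 2))‖ = 1 := by
      simp [EuclideanSpace.norm_single]
    have := ContinuousLinearMap.le_opNorm (phi2 !![0, a; b, 0])
      (EuclideanSpace.single 1 (1:ℂ))
    rwa [key, h1, mul_one, mul_one] at this

theorem norm_bound_fails_selfadjoint :
    ∃ A B : EuclideanSpace ℂ (Fin 2) →L[ℂ] EuclideanSpace ℂ (Fin 2),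
      IsSelfAdjoint A ∧ IsSelfAdjoint B ∧
      IsUnit A ∧ IsUnit B ∧ IsUnit (A + B) ∧
      ‖A‖ = 1 ∧ ‖B‖ = Real.sqrt 2 ∧
      ‖A * Ring.inverse (A + B) * B‖ = Real.sqrt 2 ∧
      ‖A * Ring.inverse (A + B) * B‖ > ‖A‖ * ‖B‖ / (‖A‖ + ‖B‖) := by
  set MA : Matrix (Fin 2) (Fin 2) ℂ := !![0, Complex.I; -Complex.I, 0] with hMA
  set MB : Matrix (Fin 2) (Fin 2) ℂ := !![0, 1 - Complex.I; 1 + Complex.I, 0] with hMB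
  -- self-adjointness
  have hsaA : IsSelfAdjoint (phi2 MA) := by
    rw [IsSelfAdjoint, ← map_star]
    congr 1
    ext i j
    fin_cases i <;> fin_cases j <;>
      simp [hMA, Matrix.star_eq_conjTranspose, Matrix.conjTranspose_apply] <;> ring
  have hsaB : IsSelfAdjoint (phi2 MB) := by
    rw [IsSelfAdjoint, ← map_star]
    congr 1
    ext i j
    fin_cases i <;> fin_cases j <;>
      simp [hMB, Matrix.star_eq_conjTranspose, Matrix.conjTranspose_apply] <;> ring
  -- units
  have hA2 : phi2 MA * phi2 MA = 1 := by
    rw [← map_mul, ← map_one phi2]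
    congr 1
    ext i j
    fin_cases i <;> fin_cases j <;>
      simp [hMA, Matrix.mul_apply, Fin.sum_univ_two, Matrix.one_apply, Complex.I_mul_I]
  have hB2 : phi2 MB * ((2:ℂ)⁻¹ • phi2 MB) = 1 := by
    rw [← map_smul, ← map_mul, ← map_one phi2]
    congr 1
    ext i j
    fin_cases i <;> fin_cases j <;>
      · simp [hMB, Matrix.mul_apply, Fin.sum_univ_two, Matrix.one_apply, Matrix.smul_apply]
        try
          ring_nf
          simp [Complex.I_sq]
          try ring
  have hB2' : ((2:ℂ)⁻¹ • phi2 MB) * phi2 MB = 1 := by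
    rw [smul_mul_assoc, ← mul_smul_comm, hB2]
  have hS2 : (phi2 MA + phi2 MB) * (phi2 MA + phi2 MB) = 1 := by
    rw [← map_add, ← map_mul, ← map_one phi2]
    congr 1
    ext i j
    fin_cases i <;> fin_cases j <;>
      simp [hMA, hMB, Matrix.mul_apply, Fin.sum_univ_two, Matrix.one_apply, Matrix.add_apply]
  have hinv : Ring.inverse (phi2 MA + phi2 MB) = phi2 MA + phi2 MB :=
    Ring.inverse_unit ⟨_, _, hS2, hS2⟩
  -- the product
  have hprod : phi2 MA * Ring.inverse (phi2 MA + phi2 MB) * phi2 MB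
      = phi2 !![0, 1 + Complex.I; 1 - Complex.I, 0] := by
    rw [hinv, ← map_add, ← map_mul, ← map_mul]
    congr 1
    ext i j
    fin_cases i <;> fin_cases j <;>
      · simp [hMA, hMB, Matrix.mul_apply, Fin.sum_univ_two, Matrix.add_apply]
        try ring_nf
        try simp [Complex.I_sq]
        try ring
  -- norms
  have hnI : ‖Complex.I‖ = 1 := by simp
  have hsub : ‖(1 - Complex.I : ℂ)‖ = Real.sqrt 2 := by
    rw [Complex.norm_def]
    norm_num [Complex.normSq_apply]
  have hadd : ‖(1 + Complex.I : ℂ)‖ = Real.sqrt 2 := by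
    rw [Complex.norm_def]
    norm_num [Complex.normSq_apply]
  have hnA : ‖phi2 MA‖ = 1 := phi2_norm _ _ 1 zero_le_one hnI (by simp)
  have hnB : ‖phi2 MB‖ = Real.sqrt 2 :=
    phi2_norm _ _ (Real.sqrt 2) (Real.sqrt_nonneg 2) hsub hadd
  have hnP : ‖phi2 MA * Ring.inverse (phi2 MA + phi2 MB) * phi2 MB‖ = Real.sqrt 2 := by
    rw [hprod]
    exact phi2_norm _ _ (Real.sqrt 2) (Real.sqrt_nonneg 2) hadd hsub
  refine ⟨phi2 MA, phi2 MB, hsaA, hsaB, ⟨⟨_, _, hA2, hA2⟩, rfl⟩,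
    ⟨⟨_, _, hB2, hB2'⟩, rfl⟩, ⟨⟨_, _, hS2, hS2⟩, rfl⟩, hnA, hnB, hnP, ?_⟩
  rw [hnA, hnB, hnP, one_mul]
  have hs : (0:ℝ) < Real.sqrt 2 := Real.sqrt_pos.mpr two_pos
  rw [gt_iff_lt, div_lt_iff₀ (by positivity)]
  nlinarith [hs]
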